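/- In the setting of the previous statement, let $w = w_1 \otimes \cdots \otimes w_m$ be a tensor product of highest weight vectors (so $R^\ell w = w$), and let $W_k = (U\mathfrak{g}[t])_k \cdot w$ be the filtration of $W$ by the degree filtration on $U\mathfrak{g}[t]$. Then $R^\ell$ preserves each $W_k$ and acts on the quotient $W_k / W_{k-1}$ as multiplication by $\zeta^k$, where $\zeta = \eta^{\ell}$. -/

import Mathlib

open scoped TensorProduct

/-- The action of a monomial `(X₁ t^{a₁}) ⋯ (X_p t^{a_p})` of the current algebra. -/
def monomialAct {g E : Type*} [AddCommGroup E] [Module ℂ E]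
    (act : g → ℕ → E →ₗ[ℂ] E) : List (g × ℕ) → E →ₗ[ℂ] E
  | [] => LinearMap.id
  | p :: L => act p.1 p.2 ∘ₗ monomialAct act L

/-- The filtration `W_k = (U g[t])_k ⬝ w₀` coming from the degree filtration on the
enveloping algebra of the current algebra: the span of all monomials of total
`t`-degree at most `k` applied to the cyclic vector `w₀`. -/
def degFil {g E : Type*} [AddCommGroup E] [Module ℂ E]
    (act : g → ℕ → E →ₗ[ℂ] E) (w₀ : E) (k : ℕ) : Submodule ℂ E :=
  Submodule.span ℂ
    {x | ∃ L : List (g × ℕ), (L.map Prod.snd).sum ≤ k ∧ x = monomialAct act L w₀}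

/-- In the setting of the rotation of a tensor product of evaluation modules at the
points `c_j = η^j` (with `λ_{j+ℓ} = λ_j`), let `w = w₁ ⊗ ⋯ ⊗ w_m` be a tensor product
of highest weight vectors, so that `R w = w`, and let `W_k = (U g[t])_k ⬝ w`.  Then
`R^ℓ` preserves each `W_k` and acts on `W_k / W_{k-1}` by multiplication by
`ζ^k`, where `ζ = η^ℓ`. -/
theorem stmt14 {g : Type*} [LieRing g] [LieAlgebra ℂ g]
    {κ : Type*} (U : κ → Type*)
    [∀ k, AddCommGroup (U k)] [∀ k, Module ℂ (U k)]
    [∀ k, LieRingModule g (U k)] [∀ k, LieModule ℂ g (U k)]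
    (m ℓ : ℕ) [NeZero m] (lab : ZMod m → κ)
    (hlab : ∀ j : ZMod m, lab (j + (ℓ : ZMod m)) = lab j)
    (η : ℂ) (hη : IsPrimitiveRoot η m)
    (R : (⨂[ℂ] j : ZMod m, U (lab j)) →ₗ[ℂ] ⨂[ℂ] j : ZMod m, U (lab j))
    (hR : ∀ v : (j : ZMod m) → U (lab j),
      R (PiTensorProduct.tprod ℂ v)
        = PiTensorProduct.tprod ℂ
            (fun j => cast (congrArg U (hlab j)) (v (j + (ℓ : ZMod m)))))
    (act : g → ℕ → (⨂[ℂ] j : ZMod m, U (lab j)) →ₗ[ℂ] ⨂[ℂ] j : ZMod m, U (lab j))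
    (hact : ∀ (X : g) (k : ℕ) (v : (j : ZMod m) → U (lab j)),
      act X k (PiTensorProduct.tprod ℂ v)
        = ∑ j : ZMod m, ((η ^ j.val) ^ k) •
            PiTensorProduct.tprod ℂ (Function.update v j ⁅X, v j⁆))
    (w₀ : (j : ZMod m) → U (lab j))
    (hw₀ : R (PiTensorProduct.tprod ℂ w₀) = PiTensorProduct.tprod ℂ w₀) :
    (∀ k, ∀ x ∈ degFil act (PiTensorProduct.tprod ℂ w₀) k,
        R x ∈ degFil act (PiTensorProduct.tprod ℂ w₀) k) ∧
    (∀ x ∈ degFil act (PiTensorProduct.tprod ℂ w₀) 0, R x = x) ∧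
    (∀ k, 1 ≤ k → ∀ x ∈ degFil act (PiTensorProduct.tprod ℂ w₀) k,
        R x - ((η ^ ℓ) ^ k) • x ∈ degFil act (PiTensorProduct.tprod ℂ w₀) (k - 1)) := by
  classical
  -- η^m = 1
  have hm1 : η ^ m = 1 := hη.pow_eq_one
  have hmod : ∀ n : ℕ, η ^ (n % m) = η ^ n := by
    intro n
    conv_rhs => rw [← Nat.div_add_mod n m]
    rw [pow_add, pow_mul, hm1, one_pow, one_mul]
  have hpow : ∀ a b : ZMod m, η ^ (a + b).val = η ^ a.val * η ^ b.val := by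
    intro a b
    rw [ZMod.val_add, hmod, pow_add]
  have hcastℓ : η ^ ((ℓ : ZMod m)).val = η ^ ℓ := by
    rw [ZMod.val_natCast, hmod]
  -- cast commutes with the bracket
  have castBr : ∀ {a b : κ} (h : a = b) (X : g) (u : U a),
      cast (congrArg U h) ⁅X, u⁆ = ⁅X, cast (congrArg U h) u⁆ := by
    intro a b h X u; subst h; rfl
  -- the key commutation relation
  have hcomm : ∀ (X : g) (k : ℕ) (x : ⨂[ℂ] j : ZMod m, U (lab j)),
      R (act X k x) = (η ^ ℓ) ^ k • act X k (R x) := by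
    intro X k x
    have : R ∘ₗ act X k = (η ^ ℓ) ^ k • (act X k ∘ₗ R) := by
      apply PiTensorProduct.ext
      apply MultilinearMap.ext
      intro v
      simp only [LinearMap.compMultilinearMap_apply, LinearMap.comp_apply,
        LinearMap.smul_apply]
      rw [hact, map_sum, hR, hact, Finset.smul_sum]
      rw [← Equiv.sum_comp (Equiv.addRight (ℓ : ZMod m))]
      refine Finset.sum_congr rfl ?_
      intro j _
      simp only [Equiv.coe_addRight]
      rw [map_smul, hR]
      have hterm : (fun i => cast (congrArg U (hlab i))
            ((Function.update v (j + (ℓ : ZMod m)) ⁅X, v (j + (ℓ : ZMod m))⁆)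
              (i + (ℓ : ZMod m))))
          = Function.update
              (fun i => cast (congrArg U (hlab i)) (v (i + (ℓ : ZMod m)))) j
              ⁅X, cast (congrArg U (hlab j)) (v (j + (ℓ : ZMod m)))⁆ := by
        funext i
        by_cases hi : i = j
        · subst hi
          rw [Function.update_self, Function.update_self, castBr (hlab _)]
        · have hi' : i + (ℓ : ZMod m) ≠ j + (ℓ : ZMod m) := fun h => hi (by
            have := add_right_cancel h; exact this)
          rw [Function.update_of_ne hi', Function.update_of_ne hi]
      erw [hterm]; rw [smul_smul]
      congr 1
      rw [hpow, hcastℓ, mul_pow, mul_comm]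
    exact LinearMap.congr_fun this x
  -- R on monomials
  set ζ : ℂ := η ^ ℓ with hζ
  have hmono : ∀ L : List (g × ℕ),
      R (monomialAct act L (PiTensorProduct.tprod ℂ w₀))
        = ζ ^ ((L.map Prod.snd).sum) •
            monomialAct act L (PiTensorProduct.tprod ℂ w₀) := by
    intro L
    induction L with
    | nil => simpa [monomialAct] using hw₀
    | cons p L ih =>
        simp only [monomialAct, LinearMap.comp_apply, List.map_cons, List.sum_cons]
        rw [hcomm, ih, map_smul, smul_smul, ← pow_add]
  refine ⟨?_, ?_, ?_⟩
  · intro k x hx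
    refine Submodule.span_induction ?_ ?_ ?_ ?_ hx
    · rintro x ⟨L, hL, rfl⟩
      rw [hmono]
      exact Submodule.smul_mem _ _ (Submodule.subset_span ⟨L, hL, rfl⟩)
    · simp
    · intro a b _ _ ha hb
      rw [map_add]; exact Submodule.add_mem _ ha hb
    · intro c a _ ha
      rw [map_smul]; exact Submodule.smul_mem _ _ ha
  · intro x hx
    refine Submodule.span_induction ?_ ?_ ?_ ?_ hx
    · rintro x ⟨L, hL, rfl⟩
      have hs : (L.map Prod.snd).sum = 0 := Nat.le_zero.mp hL
      rw [hmono, hs, pow_zero, one_smul]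
    · simp
    · intro a b _ _ ha hb; rw [map_add, ha, hb]
    · intro c a _ ha; rw [map_smul, ha]
  · intro k hk x hx
    refine Submodule.span_induction ?_ ?_ ?_ ?_ hx
    · rintro x ⟨L, hL, rfl⟩
      rw [hmono, ← sub_smul]
      rcases eq_or_lt_of_le hL with h | h
      · rw [h, sub_self, zero_smul]; exact Submodule.zero_mem _
      · refine Submodule.smul_mem _ _ (Submodule.subset_span ⟨L, ?_, rfl⟩)
        omega
    · simp
    · intro a b _ _ ha hb
      have : R (a + b) - ζ ^ k • (a + b) = (R a - ζ ^ k • a) + (R b - ζ ^ k • b) := by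
        rw [map_add]; module
      rw [this]; exact Submodule.add_mem _ ha hb
    · intro c a _ ha
      have : R (c • a) - ζ ^ k • (c • a) = c • (R a - ζ ^ k • a) := by
        rw [map_smul]; module
      rw [this]; exact Submodule.smul_mem _ _ ha
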